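/- arXiv:2007.15478 — 2 statements merged into one kernel-verified Lean document; each statement's English description precedes it below -/
import Mathlib

section
/- For every quadratic word equation E, the set {E' : E ⇒* E'} of word equations reachable from E under the Nielsen transformation is finite. -/
namespace WordEq

variable {A V : Type*}

/-- A word over the alphabet of constants `A` and variables `V`. -/
abbrev Word (A V : Type*) := List (A ⊕ V)

/-- A word equation `L = R`, given as the pair `(L, R)`. -/
abbrev Equation (A V : Type*) := Word A V × Word A V

/-- Substitute the word `r` for every occurrence of the variable `x` in `w`. -/
def substVar [DecidableEq V] (x : V) (r : Word A V) (w : Word A V) : Word A V :=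
  w.flatMap fun s =>
    match s with
    | Sum.inl a => [Sum.inl a]
    | Sum.inr y => if y = x then r else [Sum.inr y]

/-- The number of occurrences of the variable `x` in the equation `E`
(counting both sides). -/
def varCount [DecidableEq A] [DecidableEq V] (E : Equation A V) (x : V) : ℕ :=
  (E.1 ++ E.2).count (Sum.inr x)

/-- An equation is quadratic if every variable occurs at most twice. -/
def Quadratic [DecidableEq A] [DecidableEq V] (E : Equation A V) : Prop :=
  ∀ x : V, varCount E x ≤ 2

/-- Apply a substitution (a map from variables to constant words) to a word,
i.e. the unique monoid homomorphism `(A ∪ V)* → A*` extending `σ` and fixing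
every constant. -/
def applySub (σ : V → List A) (w : Word A V) : List A :=
  w.flatMap fun s =>
    match s with
    | Sum.inl a => [a]
    | Sum.inr x => σ x

/-- `σ` is a solution of the word equation `E`. -/
def IsSolution (σ : V → List A) (E : Equation A V) : Prop :=
  applySub σ E.1 = applySub σ E.2

/-- The length `|E| = |L| + |R|` of a word equation. -/
def eqLen (E : Equation A V) : ℕ := E.1.length + E.2.length

/-- The Nielsen transformation (Levi's method) rewriting relation on word
equations.  The rules `p1`–`p4` remove a nonempty prefix from an equation
`α·w₁ = β·w₂`; the rules `eraseL`/`eraseR` erase a variable that is guessed to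
denote the empty word (substituting `ε` for it everywhere). -/
inductive Nielsen [DecidableEq V] : Equation A V → Equation A V → Prop
  | eraseL (x : V) (w₁ w₂ : Word A V) :
      Nielsen (Sum.inr x :: w₁, w₂) (substVar x [] w₁, substVar x [] w₂)
  | eraseR (w₁ : Word A V) (x : V) (w₂ : Word A V) :
      Nielsen (w₁, Sum.inr x :: w₂) (substVar x [] w₁, substVar x [] w₂)
  | p1 (α : A ⊕ V) (w₁ w₂ : Word A V) :
      Nielsen (α :: w₁, α :: w₂) (w₁, w₂)
  | p2 (a : A) (y : V) (w₁ w₂ : Word A V) :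
      Nielsen (Sum.inl a :: w₁, Sum.inr y :: w₂)
        (substVar y [Sum.inl a, Sum.inr y] w₁,
          Sum.inr y :: substVar y [Sum.inl a, Sum.inr y] w₂)
  | p3 (x : V) (a : A) (w₁ w₂ : Word A V) :
      Nielsen (Sum.inr x :: w₁, Sum.inl a :: w₂)
        (Sum.inr x :: substVar x [Sum.inl a, Sum.inr x] w₁,
          substVar x [Sum.inl a, Sum.inr x] w₂)
  | p4L (x y : V) (hxy : x ≠ y) (w₁ w₂ : Word A V) :
      Nielsen (Sum.inr x :: w₁, Sum.inr y :: w₂)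
        (substVar y [Sum.inr x, Sum.inr y] w₁,
          Sum.inr y :: substVar y [Sum.inr x, Sum.inr y] w₂)
  | p4R (x y : V) (hxy : x ≠ y) (w₁ w₂ : Word A V) :
      Nielsen (Sum.inr x :: w₁, Sum.inr y :: w₂)
        (Sum.inr x :: substVar x [Sum.inr y, Sum.inr x] w₁,
          substVar x [Sum.inr y, Sum.inr x] w₂)

instance sumLawfulBEq [DecidableEq A] [DecidableEq V] : LawfulBEq (A ⊕ V) where
  eq_of_beq {a b} h := by
    cases a with
    | inl x =>
      cases b with
      | inl y => rw [show (Sum.inl x == Sum.inl y) = (x == y) from rfl] at h; rw [eq_of_beq h]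
      | inr y => rw [show (Sum.inl x == Sum.inr y) = false from rfl] at h; exact absurd h (by simp)
    | inr x =>
      cases b with
      | inl y => rw [show (Sum.inr x == Sum.inl y) = false from rfl] at h; exact absurd h (by simp)
      | inr y => rw [show (Sum.inr x == Sum.inr y) = (x == y) from rfl] at h; rw [eq_of_beq h]
  rfl {a} := by
    cases a with
    | inl x => rw [show (Sum.inl x == Sum.inl x) = (x == x) from rfl]; exact beq_self_eq_true x
    | inr x => rw [show (Sum.inr x == Sum.inr x) = (x == x) from rfl]; exact beq_self_eq_true x

lemma count_cons' [DecidableEq A] [DecidableEq V] (s t : A ⊕ V) (w : Word A V) :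
    List.count s (t :: w) = (if s = t then 1 else 0) + List.count s w := by
  by_cases h : s = t
  · subst h; rw [if_pos rfl, List.count_cons_self]; omega
  · rw [if_neg h, List.count_cons_of_ne (Ne.symm h)]; omega

lemma count_substVar [DecidableEq A] [DecidableEq V] (x y : V) (r w : Word A V) :
    (substVar x r w).count (Sum.inr y) =
      (if y = x then 0 else w.count (Sum.inr y)) +
        r.count (Sum.inr y) * w.count (Sum.inr x) := by
  induction w with
  | nil => simp [substVar]
  | cons s w ih =>
    cases s with
    | inl a =>
      simp only [substVar, List.flatMap_cons, List.count_append] at ih ⊢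
      simp only [count_cons', List.count_nil, Nat.add_zero, Nat.zero_add]
      split_ifs at ih ⊢ <;> simp_all [Nat.mul_add, Nat.mul_one] <;> linarith
    | inr z =>
      simp only [substVar, List.flatMap_cons, List.count_append] at ih ⊢
      by_cases hz : z = x
      · subst hz
        rw [if_pos rfl]
        simp only [count_cons', List.count_nil, Nat.add_zero, Nat.zero_add, Sum.inr.injEq]
        split_ifs at ih ⊢ <;> simp_all [Nat.mul_add, Nat.mul_one] <;> linarith
      · rw [if_neg hz]
        simp only [count_cons', List.count_nil, Nat.add_zero, Nat.zero_add, Sum.inr.injEq]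
        split_ifs at ih ⊢ <;> simp_all [Nat.mul_add, Nat.mul_one] <;> linarith

lemma length_substVar [DecidableEq A] [DecidableEq V] (x : V) (r w : Word A V) :
    (substVar x r w).length + w.count (Sum.inr x) =
      w.length + r.length * w.count (Sum.inr x) := by
  induction w with
  | nil => simp [substVar]
  | cons s w ih =>
    cases s with
    | inl a =>
      simp only [substVar, List.flatMap_cons, List.length_append] at ih ⊢
      simp only [count_cons', List.length_cons, List.length_nil]
      split_ifs at ih ⊢ <;> simp_all [Nat.mul_add, Nat.mul_one] <;> linarith
    | inr z =>
      simp only [substVar, List.flatMap_cons, List.length_append] at ih ⊢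
      by_cases hz : z = x
      · subst hz
        rw [if_pos rfl]
        simp only [count_cons', List.length_cons, Sum.inr.injEq, if_pos rfl]
        simp_all [Nat.mul_add, Nat.mul_one]
        linarith
      · rw [if_neg hz]
        simp only [count_cons', List.length_cons, List.length_nil, Sum.inr.injEq,
          if_neg (show ¬ x = z from fun h => hz h.symm), Nat.zero_add]
        simp_all
        linarith

lemma nielsen_step [DecidableEq A] [DecidableEq V] {E E' : Equation A V}
    (h : Nielsen E E') (hq : Quadratic E) :
    Quadratic E' ∧ eqLen E' ≤ eqLen E := by
  cases h with
  | eraseL x w₁ w₂ =>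
    constructor
    · intro z
      have hz := hq z
      simp only [Quadratic, varCount, List.count_append, count_cons', eqLen] at hz ⊢
      simp only [count_substVar, List.count_nil]
      split_ifs at hz ⊢ <;> omega
    · have h1 := length_substVar (A := A) x [] w₁
      have h2 := length_substVar (A := A) x [] w₂
      simp only [eqLen, List.length_cons, List.length_nil] at *
      omega
  | eraseR w₁ x w₂ =>
    constructor
    · intro z
      have hz := hq z
      simp only [Quadratic, varCount, List.count_append, count_cons', eqLen] at hz ⊢
      simp only [count_substVar, List.count_nil]
      split_ifs at hz ⊢ <;> omega
    · have h1 := length_substVar (A := A) x [] w₁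
      have h2 := length_substVar (A := A) x [] w₂
      simp only [eqLen, List.length_cons, List.length_nil] at *
      omega
  | p1 α w₁ w₂ =>
    constructor
    · intro z
      have hz := hq z
      simp only [Quadratic, varCount, List.count_append, count_cons'] at hz ⊢
      omega
    · simp [eqLen]; omega
  | p2 a y w₁ w₂ =>
    have hy := hq y
    simp only [Quadratic, varCount, List.count_append, count_cons'] at hy
    constructor
    · intro z
      have hz := hq z
      simp only [Quadratic, varCount, List.count_append, count_cons'] at hz ⊢
      simp only [count_substVar, List.count_cons, List.count_nil]
      split_ifs at hz ⊢ <;> simp_all <;> omega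
    · have h1 := length_substVar (A := A) y [Sum.inl a, Sum.inr y] w₁
      have h2 := length_substVar (A := A) y [Sum.inl a, Sum.inr y] w₂
      simp only [eqLen, List.length_cons, List.length_nil] at *
      simp_all
      omega
  | p3 x a w₁ w₂ =>
    have hy := hq x
    simp only [Quadratic, varCount, List.count_append, count_cons'] at hy
    constructor
    · intro z
      have hz := hq z
      simp only [Quadratic, varCount, List.count_append, count_cons'] at hz ⊢
      simp only [count_substVar, List.count_cons, List.count_nil]
      split_ifs at hz ⊢ <;> simp_all <;> omega
    · have h1 := length_substVar (A := A) x [Sum.inl a, Sum.inr x] w₁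
      have h2 := length_substVar (A := A) x [Sum.inl a, Sum.inr x] w₂
      simp only [eqLen, List.length_cons, List.length_nil] at *
      simp_all
      omega
  | p4L x y hxy w₁ w₂ =>
    have hx := hq x
    have hy := hq y
    simp only [Quadratic, varCount, List.count_append, count_cons'] at hx hy
    constructor
    · intro z
      have hz := hq z
      simp only [Quadratic, varCount, List.count_append, count_cons'] at hz ⊢
      simp only [count_substVar, List.count_cons, List.count_nil]
      split_ifs at hz ⊢ <;> simp_all <;> omega
    · have h1 := length_substVar (A := A) y [Sum.inr x, Sum.inr y] w₁
      have h2 := length_substVar (A := A) y [Sum.inr x, Sum.inr y] w₂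
      simp only [eqLen, List.length_cons, List.length_nil] at *
      simp_all
      omega
  | p4R x y hxy w₁ w₂ =>
    have hx := hq x
    have hy := hq y
    simp only [Quadratic, varCount, List.count_append, count_cons'] at hx hy
    constructor
    · intro z
      have hz := hq z
      simp only [Quadratic, varCount, List.count_append, count_cons'] at hz ⊢
      simp only [count_substVar, List.count_cons, List.count_nil]
      split_ifs at hz ⊢ <;> simp_all <;> omega
    · have h1 := length_substVar (A := A) x [Sum.inr y, Sum.inr x] w₁
      have h2 := length_substVar (A := A) x [Sum.inr y, Sum.inr x] w₂
      simp only [eqLen, List.length_cons, List.length_nil] at *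
      simp_all
      omega

lemma nielsen_invariant [DecidableEq A] [DecidableEq V] {E E' : Equation A V}
    (h : Relation.ReflTransGen Nielsen E E') (hq : Quadratic E) :
    Quadratic E' ∧ eqLen E' ≤ eqLen E := by
  induction h with
  | refl => exact ⟨hq, le_rfl⟩
  | tail _ hstep ih =>
    obtain ⟨hq', hlen'⟩ := ih
    obtain ⟨hq'', hlen''⟩ := nielsen_step hstep hq'
    exact ⟨hq'', hlen''.trans hlen'⟩

/-- The set of word equations reachable from a quadratic
word equation under the Nielsen transformation is finite. -/
theorem nielsen_reachable_finite
    [Finite A] [Finite V] [DecidableEq A] [DecidableEq V]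
    (E : Equation A V) (hq : Quadratic E) :
    {E' : Equation A V | Relation.ReflTransGen Nielsen E E'}.Finite := by
  apply Set.Finite.subset
    (((List.finite_length_le (A ⊕ V) (eqLen E)).prod
      (List.finite_length_le (A ⊕ V) (eqLen E))))
  intro E' hE'
  have := (nielsen_invariant hE' hq).2
  exact ⟨le_trans (Nat.le_add_right _ _) this, le_trans (Nat.le_add_left _ _) this⟩

end WordEq
end

section
/- Let E be a quadratic word equation and σ an assignment of words in A* to the variables occurring in E. Then σ is a solution of E if and only if, in the annotated Nielsen transformation, E[σ] ⇒* (ε = ε)[σ'] where σ' is the assignment with empty domain. -/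
namespace WordEq

variable {A V : Type*}

/-- The variable `x` occurs in the equation `E`. -/
def Occurs (x : V) (E : Equation A V) : Prop :=
  Sum.inr x ∈ E.1 ∨ Sum.inr x ∈ E.2

/-- The annotated Nielsen transformation: it acts on pairs `(E, σ)` of an
equation together with an assignment of constant words to its variables.
The assignment of the target configuration is only constrained on the
variables still occurring in the target equation (modelling the restriction
of the assignment to the variables of the target equation). -/
inductive NielsenAnn [DecidableEq V] :
    Equation A V × (V → List A) → Equation A V × (V → List A) → Prop
  | eraseL (x : V) (w₁ w₂ : Word A V) (σ σ' : V → List A)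
      (hx : σ x = [])
      (hagree : ∀ z : V, Occurs z (substVar x [] w₁, substVar x [] w₂) → σ' z = σ z) :
      NielsenAnn ((Sum.inr x :: w₁, w₂), σ)
        ((substVar x [] w₁, substVar x [] w₂), σ')
  | eraseR (w₁ : Word A V) (x : V) (w₂ : Word A V) (σ σ' : V → List A)
      (hx : σ x = [])
      (hagree : ∀ z : V, Occurs z (substVar x [] w₁, substVar x [] w₂) → σ' z = σ z) :
      NielsenAnn ((w₁, Sum.inr x :: w₂), σ)
        ((substVar x [] w₁, substVar x [] w₂), σ')
  | p1 (α : A ⊕ V) (w₁ w₂ : Word A V) (σ σ' : V → List A)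
      (hagree : ∀ z : V, Occurs z (w₁, w₂) → σ' z = σ z) :
      NielsenAnn ((α :: w₁, α :: w₂), σ) ((w₁, w₂), σ')
  | p2 (a : A) (y : V) (w₁ w₂ : Word A V) (σ σ' : V → List A)
      (hy : σ y = a :: σ' y)
      (hagree : ∀ z : V, z ≠ y →
        Occurs z (substVar y [Sum.inl a, Sum.inr y] w₁,
          Sum.inr y :: substVar y [Sum.inl a, Sum.inr y] w₂) → σ' z = σ z) :
      NielsenAnn ((Sum.inl a :: w₁, Sum.inr y :: w₂), σ)
        ((substVar y [Sum.inl a, Sum.inr y] w₁,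
          Sum.inr y :: substVar y [Sum.inl a, Sum.inr y] w₂), σ')
  | p3 (x : V) (a : A) (w₁ w₂ : Word A V) (σ σ' : V → List A)
      (hx : σ x = a :: σ' x)
      (hagree : ∀ z : V, z ≠ x →
        Occurs z (Sum.inr x :: substVar x [Sum.inl a, Sum.inr x] w₁,
          substVar x [Sum.inl a, Sum.inr x] w₂) → σ' z = σ z) :
      NielsenAnn ((Sum.inr x :: w₁, Sum.inl a :: w₂), σ)
        ((Sum.inr x :: substVar x [Sum.inl a, Sum.inr x] w₁,
          substVar x [Sum.inl a, Sum.inr x] w₂), σ')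
  | p4L (x y : V) (hxy : x ≠ y) (w₁ w₂ : Word A V) (σ σ' : V → List A)
      (hne : σ x ≠ [])
      (hy : σ y = σ x ++ σ' y)
      (hagree : ∀ z : V, z ≠ y →
        Occurs z (substVar y [Sum.inr x, Sum.inr y] w₁,
          Sum.inr y :: substVar y [Sum.inr x, Sum.inr y] w₂) → σ' z = σ z) :
      NielsenAnn ((Sum.inr x :: w₁, Sum.inr y :: w₂), σ)
        ((substVar y [Sum.inr x, Sum.inr y] w₁,
          Sum.inr y :: substVar y [Sum.inr x, Sum.inr y] w₂), σ')
  | p4R (x y : V) (hxy : x ≠ y) (w₁ w₂ : Word A V) (σ σ' : V → List A)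
      (hne : σ y ≠ [])
      (hx : σ x = σ y ++ σ' x)
      (hagree : ∀ z : V, z ≠ x →
        Occurs z (Sum.inr x :: substVar x [Sum.inr y, Sum.inr x] w₁,
          substVar x [Sum.inr y, Sum.inr x] w₂) → σ' z = σ z) :
      NielsenAnn ((Sum.inr x :: w₁, Sum.inr y :: w₂), σ)
        ((Sum.inr x :: substVar x [Sum.inr y, Sum.inr x] w₁,
          substVar x [Sum.inr y, Sum.inr x] w₂), σ')


section Lemmas
set_option linter.unusedSectionVars false
variable [DecidableEq A] [DecidableEq V]

lemma applySub_nil (σ : V → List A) : applySub σ ([] : Word A V) = [] := rfl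

lemma applySub_cons (σ : V → List A) (s : A ⊕ V) (w : Word A V) :
    applySub σ (s :: w) =
      (match s with | Sum.inl a => [a] | Sum.inr x => σ x) ++ applySub σ w := by
  simp [applySub]

lemma applySub_cons_inl (σ : V → List A) (a : A) (w : Word A V) :
    applySub σ (Sum.inl a :: w) = a :: applySub σ w := by
  simp [applySub]

lemma applySub_cons_inr (σ : V → List A) (x : V) (w : Word A V) :
    applySub σ (Sum.inr x :: w) = σ x ++ applySub σ w := by
  simp [applySub]

lemma applySub_append (σ : V → List A) (w₁ w₂ : Word A V) :
    applySub σ (w₁ ++ w₂) = applySub σ w₁ ++ applySub σ w₂ := by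
  simp [applySub]

lemma substVar_nil (x : V) (r : Word A V) : substVar x r ([] : Word A V) = [] := rfl

lemma substVar_cons_inl (x : V) (r : Word A V) (a : A) (w : Word A V) :
    substVar x r (Sum.inl a :: w) = Sum.inl a :: substVar x r w := by
  simp [substVar]

lemma substVar_cons_inr (x : V) (r : Word A V) (z : V) (w : Word A V) :
    substVar x r (Sum.inr z :: w) =
      (if z = x then r else [Sum.inr z]) ++ substVar x r w := by
  simp [substVar]

lemma mem_substVar_of_ne {z x : V} (hz : z ≠ x) {w : Word A V} (r : Word A V)
    (hm : Sum.inr z ∈ w) : Sum.inr z ∈ substVar x r w := by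
  simp only [substVar, List.mem_flatMap]
  exact ⟨Sum.inr z, hm, by simp [hz]⟩

lemma mem_substVar_of_mem_r {s : A ⊕ V} {x : V} {r w : Word A V}
    (hs : s ∈ r) (hw : Sum.inr x ∈ w) : s ∈ substVar x r w := by
  simp only [substVar, List.mem_flatMap]
  exact ⟨Sum.inr x, hw, by simpa using hs⟩

lemma applySub_congr {σ₁ σ₂ : V → List A} {w : Word A V}
    (h : ∀ z : V, Sum.inr z ∈ w → σ₁ z = σ₂ z) :
    applySub σ₁ w = applySub σ₂ w := by
  induction w with
  | nil => rfl
  | cons s w ih =>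
    have ih' := ih fun z hz => h z (List.mem_cons_of_mem _ hz)
    cases s with
    | inl a => rw [applySub_cons_inl, applySub_cons_inl, ih']
    | inr z => rw [applySub_cons_inr, applySub_cons_inr, ih',
        h z List.mem_cons_self]

lemma applySub_substVar {σ σ' : V → List A} {x : V} {r w : Word A V}
    (h : Sum.inr x ∈ w → applySub σ' r = σ x)
    (h2 : ∀ z : V, z ≠ x → Sum.inr z ∈ w → σ' z = σ z) :
    applySub σ' (substVar x r w) = applySub σ w := by
  induction w with
  | nil => rfl
  | cons s w ih =>
    have ih' := ih (fun hm => h (List.mem_cons_of_mem _ hm))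
      (fun z hz hm => h2 z hz (List.mem_cons_of_mem _ hm))
    cases s with
    | inl a =>
      rw [substVar_cons_inl, applySub_cons_inl, applySub_cons_inl, ih']
    | inr z =>
      by_cases hzx : z = x
      · subst hzx
        rw [substVar_cons_inr, if_pos rfl, applySub_append, ih',
          applySub_cons_inr, h List.mem_cons_self]
      · rw [substVar_cons_inr, if_neg hzx, applySub_append, ih',
          applySub_cons_inr, applySub_cons_inr, applySub_nil, List.append_nil,
          h2 z hzx List.mem_cons_self]

lemma length_substVar_nil (x : V) (w : Word A V) :
    (substVar x ([] : Word A V) w).length ≤ w.length := by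
  induction w with
  | nil => simp [substVar_nil]
  | cons s w ih =>
    cases s with
    | inl a => rw [substVar_cons_inl]; simpa using ih
    | inr z =>
      rw [substVar_cons_inr]
      by_cases hzx : z = x <;> simp [hzx] <;> omega

end Lemmas

section Back
set_option linter.unusedSectionVars false
variable [DecidableEq A] [DecidableEq V]

lemma back_step {p q : Equation A V × (V → List A)}
    (h : NielsenAnn p q) (hs : IsSolution q.2 q.1) : IsSolution p.2 p.1 := by
  cases h with
  | eraseL x w₁ w₂ σ σ' hx hagree =>
    have e₁ : applySub σ' (substVar x [] w₁) = applySub σ w₁ :=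
      applySub_substVar (fun _ => by rw [hx]; rfl)
        (fun z hz hm => hagree z (Or.inl (mem_substVar_of_ne hz _ hm)))
    have e₂ : applySub σ' (substVar x [] w₂) = applySub σ w₂ :=
      applySub_substVar (fun _ => by rw [hx]; rfl)
        (fun z hz hm => hagree z (Or.inr (mem_substVar_of_ne hz _ hm)))
    show applySub σ (Sum.inr x :: w₁) = applySub σ w₂
    rw [applySub_cons_inr, hx, List.nil_append, ← e₁, ← e₂]
    exact hs
  | eraseR w₁ x w₂ σ σ' hx hagree =>
    have e₁ : applySub σ' (substVar x [] w₁) = applySub σ w₁ :=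
      applySub_substVar (fun _ => by rw [hx]; rfl)
        (fun z hz hm => hagree z (Or.inl (mem_substVar_of_ne hz _ hm)))
    have e₂ : applySub σ' (substVar x [] w₂) = applySub σ w₂ :=
      applySub_substVar (fun _ => by rw [hx]; rfl)
        (fun z hz hm => hagree z (Or.inr (mem_substVar_of_ne hz _ hm)))
    show applySub σ w₁ = applySub σ (Sum.inr x :: w₂)
    rw [applySub_cons_inr, hx, List.nil_append, ← e₁, ← e₂]
    exact hs
  | p1 α w₁ w₂ σ σ' hagree =>
    have e₁ : applySub σ' w₁ = applySub σ w₁ :=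
      applySub_congr fun z hm => hagree z (Or.inl hm)
    have e₂ : applySub σ' w₂ = applySub σ w₂ :=
      applySub_congr fun z hm => hagree z (Or.inr hm)
    show applySub σ (α :: w₁) = applySub σ (α :: w₂)
    rw [applySub_cons, applySub_cons, ← e₁, ← e₂, hs]
  | p2 a y w₁ w₂ σ σ' hy hagree =>
    have e₁ : applySub σ' (substVar y [Sum.inl a, Sum.inr y] w₁) = applySub σ w₁ :=
      applySub_substVar
        (fun _ => by
          rw [applySub_cons_inl, applySub_cons_inr, applySub_nil,
            List.append_nil, ← hy])
        (fun z hz hm => hagree z hz (Or.inl (mem_substVar_of_ne hz _ hm)))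
    have e₂ : applySub σ' (substVar y [Sum.inl a, Sum.inr y] w₂) = applySub σ w₂ :=
      applySub_substVar
        (fun _ => by
          rw [applySub_cons_inl, applySub_cons_inr, applySub_nil,
            List.append_nil, ← hy])
        (fun z hz hm => hagree z hz
          (Or.inr (List.mem_cons_of_mem _ (mem_substVar_of_ne hz _ hm))))
    have hs' : applySub σ w₁ = σ' y ++ applySub σ w₂ := by
      rw [← e₁, ← e₂]; simpa [applySub_cons_inr, IsSolution] using hs
    show applySub σ (Sum.inl a :: w₁) = applySub σ (Sum.inr y :: w₂)
    rw [applySub_cons_inl, applySub_cons_inr, hy, hs']; simp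
  | p3 x a w₁ w₂ σ σ' hx hagree =>
    have e₁ : applySub σ' (substVar x [Sum.inl a, Sum.inr x] w₁) = applySub σ w₁ :=
      applySub_substVar
        (fun _ => by
          rw [applySub_cons_inl, applySub_cons_inr, applySub_nil,
            List.append_nil, ← hx])
        (fun z hz hm => hagree z hz
          (Or.inl (List.mem_cons_of_mem _ (mem_substVar_of_ne hz _ hm))))
    have e₂ : applySub σ' (substVar x [Sum.inl a, Sum.inr x] w₂) = applySub σ w₂ :=
      applySub_substVar
        (fun _ => by
          rw [applySub_cons_inl, applySub_cons_inr, applySub_nil,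
            List.append_nil, ← hx])
        (fun z hz hm => hagree z hz (Or.inr (mem_substVar_of_ne hz _ hm)))
    have hs' : σ' x ++ applySub σ w₁ = applySub σ w₂ := by
      rw [← e₁, ← e₂]; simpa [applySub_cons_inr, IsSolution] using hs
    show applySub σ (Sum.inr x :: w₁) = applySub σ (Sum.inl a :: w₂)
    rw [applySub_cons_inr, applySub_cons_inl, hx, ← hs']; simp
  | p4L x y hxy w₁ w₂ σ σ' hne hy hagree =>
    have e₁ : applySub σ' (substVar y [Sum.inr x, Sum.inr y] w₁) = applySub σ w₁ :=
      applySub_substVar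
        (fun hm => by
          have hx' : σ' x = σ x :=
            hagree x hxy (Or.inl (mem_substVar_of_mem_r (by simp) hm))
          rw [applySub_cons_inr, applySub_cons_inr, applySub_nil,
            List.append_nil, hx', ← hy])
        (fun z hz hm => hagree z hz (Or.inl (mem_substVar_of_ne hz _ hm)))
    have e₂ : applySub σ' (substVar y [Sum.inr x, Sum.inr y] w₂) = applySub σ w₂ :=
      applySub_substVar
        (fun hm => by
          have hx' : σ' x = σ x :=
            hagree x hxy (Or.inr (List.mem_cons_of_mem _
              (mem_substVar_of_mem_r (by simp) hm)))
          rw [applySub_cons_inr, applySub_cons_inr, applySub_nil,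
            List.append_nil, hx', ← hy])
        (fun z hz hm => hagree z hz
          (Or.inr (List.mem_cons_of_mem _ (mem_substVar_of_ne hz _ hm))))
    have hs' : applySub σ w₁ = σ' y ++ applySub σ w₂ := by
      rw [← e₁, ← e₂]; simpa [applySub_cons_inr, IsSolution] using hs
    show applySub σ (Sum.inr x :: w₁) = applySub σ (Sum.inr y :: w₂)
    rw [applySub_cons_inr, applySub_cons_inr, hy, hs']; simp
  | p4R x y hxy w₁ w₂ σ σ' hne hx hagree =>
    have e₁ : applySub σ' (substVar x [Sum.inr y, Sum.inr x] w₁) = applySub σ w₁ :=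
      applySub_substVar
        (fun hm => by
          have hy' : σ' y = σ y :=
            hagree y (Ne.symm hxy) (Or.inl (List.mem_cons_of_mem _
              (mem_substVar_of_mem_r (by simp) hm)))
          rw [applySub_cons_inr, applySub_cons_inr, applySub_nil,
            List.append_nil, hy', ← hx])
        (fun z hz hm => hagree z hz
          (Or.inl (List.mem_cons_of_mem _ (mem_substVar_of_ne hz _ hm))))
    have e₂ : applySub σ' (substVar x [Sum.inr y, Sum.inr x] w₂) = applySub σ w₂ :=
      applySub_substVar
        (fun hm => by
          have hy' : σ' y = σ y :=
            hagree y (Ne.symm hxy) (Or.inr (mem_substVar_of_mem_r (by simp) hm))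
          rw [applySub_cons_inr, applySub_cons_inr, applySub_nil,
            List.append_nil, hy', ← hx])
        (fun z hz hm => hagree z hz (Or.inr (mem_substVar_of_ne hz _ hm)))
    have hs' : σ' x ++ applySub σ w₁ = applySub σ w₂ := by
      rw [← e₁, ← e₂]; simpa [applySub_cons_inr, IsSolution] using hs
    show applySub σ (Sum.inr x :: w₁) = applySub σ (Sum.inr y :: w₂)
    rw [applySub_cons_inr, applySub_cons_inr, hx, ← hs']; simp

end Back

section Fwd
set_option linter.unusedSectionVars false
variable [DecidableEq A] [DecidableEq V]

lemma applySub_substVar_nil {σ : V → List A} {x : V} (hx : σ x = [])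
    (w : Word A V) : applySub σ (substVar x [] w) = applySub σ w :=
  applySub_substVar (fun _ => by rw [hx]; rfl) (fun _ _ _ => rfl)

lemma eqLen_pair (w₁ w₂ : Word A V) : eqLen (w₁, w₂) = w₁.length + w₂.length := rfl

lemma fwd :
    ∀ (n m : ℕ) (E : Equation A V) (σ : V → List A),
      (applySub σ E.1).length + (applySub σ E.2).length ≤ n → eqLen E ≤ m →
      IsSolution σ E →
      ∃ σ' : V → List A,
        Relation.ReflTransGen NielsenAnn (E, σ) ((([], []) : Equation A V), σ') := by
  intro n
  induction n using Nat.strong_induction_on with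
  | _ n ihn =>
  intro m
  induction m using Nat.strong_induction_on with
  | _ m ihm =>
  intro E σ hn hm hsol
  obtain ⟨L, R⟩ := E
  have hs0 : applySub σ L = applySub σ R := hsol
  -- generic eraseR case
  have eraseRcase : ∀ (y : V) (w₂ : Word A V),
      R = Sum.inr y :: w₂ → σ y = [] →
      ∃ σ' : V → List A,
        Relation.ReflTransGen NielsenAnn ((L, R), σ)
          ((([], []) : Equation A V), σ') := by
    rintro y w₂ hR hy0
    subst hR
    have e₁ := applySub_substVar_nil hy0 L
    have e₂ := applySub_substVar_nil hy0 w₂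
    have hsol' : IsSolution σ (substVar y [] L, substVar y [] w₂) := by
      show applySub σ _ = applySub σ _
      rw [e₁, e₂]
      rw [applySub_cons_inr, hy0, List.nil_append] at hs0
      exact hs0
    have ln : (applySub σ (substVar y [] L)).length +
        (applySub σ (substVar y [] w₂)).length ≤ n := by
      rw [e₁, e₂]
      rw [applySub_cons_inr, hy0, List.nil_append] at hn
      exact hn
    have lm : eqLen (substVar y [] L, substVar y [] w₂) < m := by
      have h₁ := length_substVar_nil y L
      have h₂ := length_substVar_nil y w₂
      rw [eqLen_pair] at hm ⊢
      simp only [List.length_cons] at hm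
      omega
    obtain ⟨σ'', hp⟩ := ihm _ lm (substVar y [] L, substVar y [] w₂) σ ln le_rfl hsol'
    exact ⟨σ'', Relation.ReflTransGen.head
      (NielsenAnn.eraseR L y w₂ σ σ hy0 (fun _ _ => rfl)) hp⟩
  -- generic eraseL case
  have eraseLcase : ∀ (x : V) (w₁ : Word A V),
      L = Sum.inr x :: w₁ → σ x = [] →
      ∃ σ' : V → List A,
        Relation.ReflTransGen NielsenAnn ((L, R), σ)
          ((([], []) : Equation A V), σ') := by
    rintro x w₁ hL hx0
    subst hL
    have e₁ := applySub_substVar_nil hx0 w₁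
    have e₂ := applySub_substVar_nil hx0 R
    have hsol' : IsSolution σ (substVar x [] w₁, substVar x [] R) := by
      show applySub σ _ = applySub σ _
      rw [e₁, e₂]
      rw [applySub_cons_inr, hx0, List.nil_append] at hs0
      exact hs0
    have ln : (applySub σ (substVar x [] w₁)).length +
        (applySub σ (substVar x [] R)).length ≤ n := by
      rw [e₁, e₂]
      rw [applySub_cons_inr, hx0, List.nil_append] at hn
      exact hn
    have lm : eqLen (substVar x [] w₁, substVar x [] R) < m := by
      have h₁ := length_substVar_nil x w₁
      have h₂ := length_substVar_nil x R
      rw [eqLen_pair] at hm ⊢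
      simp only [List.length_cons] at hm
      omega
    obtain ⟨σ'', hp⟩ := ihm _ lm (substVar x [] w₁, substVar x [] R) σ ln le_rfl hsol'
    exact ⟨σ'', Relation.ReflTransGen.head
      (NielsenAnn.eraseL x w₁ R σ σ hx0 (fun _ _ => rfl)) hp⟩
  rcases L with _ | ⟨s₁, L⟩
  · rcases R with _ | ⟨s₂, R⟩
    · exact ⟨σ, Relation.ReflTransGen.refl⟩
    · rcases s₂ with b | y
      · rw [applySub_nil, applySub_cons_inl] at hs0
        exact absurd hs0 (by simp)
      · rw [applySub_nil, applySub_cons_inr] at hs0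
        have hy0 : σ y = [] := (List.append_eq_nil_iff.mp hs0.symm).1
        exact eraseRcase y R rfl hy0
  · rcases R with _ | ⟨s₂, R⟩
    · rcases s₁ with a | x
      · rw [applySub_nil, applySub_cons_inl] at hs0
        exact absurd hs0 (by simp)
      · rw [applySub_nil, applySub_cons_inr] at hs0
        have hx0 : σ x = [] := (List.append_eq_nil_iff.mp hs0).1
        exact eraseLcase x L rfl hx0
    · rcases s₁ with a | x
      · rcases s₂ with b | y
        · -- p1 with constants
          rw [applySub_cons_inl, applySub_cons_inl] at hs0
          injection hs0 with hab hXY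
          subst hab
          have hsol' : IsSolution σ (L, R) := hXY
          have hlt : (applySub σ L).length + (applySub σ R).length < n := by
            rw [applySub_cons_inl, applySub_cons_inl] at hn
            simp only [List.length_cons] at hn
            omega
          obtain ⟨σ'', hp⟩ := ihn _ hlt (eqLen (L, R)) (L, R) σ le_rfl le_rfl hsol'
          exact ⟨σ'', Relation.ReflTransGen.head
            (NielsenAnn.p1 (Sum.inl a) L R σ σ (fun _ _ => rfl)) hp⟩
        · -- const / var
          rcases hσy : σ y with _ | ⟨c, t⟩
          · exact eraseRcase y R rfl hσy
          · -- p2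
            rw [applySub_cons_inl, applySub_cons_inr, hσy, List.cons_append] at hs0
            injection hs0 with hac hXY
            subst hac
            set σ₂ := Function.update σ y t with hσ₂
            have hupd : σ₂ y = t := Function.update_self y t σ
            have e₁ : applySub σ₂ (substVar y [Sum.inl a, Sum.inr y] L) =
                applySub σ L :=
              applySub_substVar
                (fun _ => by
                  rw [applySub_cons_inl, applySub_cons_inr, applySub_nil,
                    List.append_nil, hupd, hσy])
                (fun z hz _ => Function.update_of_ne hz _ _)
            have e₂ : applySub σ₂ (substVar y [Sum.inl a, Sum.inr y] R) =
                applySub σ R :=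
              applySub_substVar
                (fun _ => by
                  rw [applySub_cons_inl, applySub_cons_inr, applySub_nil,
                    List.append_nil, hupd, hσy])
                (fun z hz _ => Function.update_of_ne hz _ _)
            have hsol' : IsSolution σ₂ (substVar y [Sum.inl a, Sum.inr y] L,
                Sum.inr y :: substVar y [Sum.inl a, Sum.inr y] R) := by
              show applySub σ₂ _ = applySub σ₂ _
              rw [e₁, applySub_cons_inr, hupd, e₂]
              exact hXY
            have hlt : (applySub σ₂ (substVar y [Sum.inl a, Sum.inr y] L)).length +
                (applySub σ₂ (Sum.inr y :: substVar y [Sum.inl a, Sum.inr y] R)).length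
                < n := by
              rw [e₁, applySub_cons_inr, hupd, e₂]
              rw [applySub_cons_inl, applySub_cons_inr, hσy] at hn
              simp only [List.length_cons, List.length_append] at hn ⊢
              omega
            obtain ⟨σ'', hp⟩ := ihn _ hlt _ _ σ₂ le_rfl le_rfl hsol'
            exact ⟨σ'', Relation.ReflTransGen.head
              (NielsenAnn.p2 a y L R σ σ₂ (by rw [hupd, hσy])
                (fun z hz _ => Function.update_of_ne hz _ _)) hp⟩
      · rcases s₂ with b | y
        · -- var / const
          rcases hσx : σ x with _ | ⟨c, t⟩
          · exact eraseLcase x L rfl hσx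
          · -- p3
            rw [applySub_cons_inr, applySub_cons_inl, hσx, List.cons_append] at hs0
            injection hs0 with hcb hXY
            subst hcb
            set σ₂ := Function.update σ x t with hσ₂
            have hupd : σ₂ x = t := Function.update_self x t σ
            have e₁ : applySub σ₂ (substVar x [Sum.inl c, Sum.inr x] L) =
                applySub σ L :=
              applySub_substVar
                (fun _ => by
                  rw [applySub_cons_inl, applySub_cons_inr, applySub_nil,
                    List.append_nil, hupd, hσx])
                (fun z hz _ => Function.update_of_ne hz _ _)
            have e₂ : applySub σ₂ (substVar x [Sum.inl c, Sum.inr x] R) =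
                applySub σ R :=
              applySub_substVar
                (fun _ => by
                  rw [applySub_cons_inl, applySub_cons_inr, applySub_nil,
                    List.append_nil, hupd, hσx])
                (fun z hz _ => Function.update_of_ne hz _ _)
            have hsol' : IsSolution σ₂
                (Sum.inr x :: substVar x [Sum.inl c, Sum.inr x] L,
                  substVar x [Sum.inl c, Sum.inr x] R) := by
              show applySub σ₂ _ = applySub σ₂ _
              rw [applySub_cons_inr, hupd, e₁, e₂]
              exact hXY
            have hlt :
                (applySub σ₂ (Sum.inr x :: substVar x [Sum.inl c, Sum.inr x] L)).length +
                (applySub σ₂ (substVar x [Sum.inl c, Sum.inr x] R)).length < n := by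
              rw [applySub_cons_inr, hupd, e₁, e₂]
              rw [applySub_cons_inr, applySub_cons_inl, hσx] at hn
              simp only [List.length_cons, List.length_append] at hn ⊢
              omega
            obtain ⟨σ'', hp⟩ := ihn _ hlt _ _ σ₂ le_rfl le_rfl hsol'
            exact ⟨σ'', Relation.ReflTransGen.head
              (NielsenAnn.p3 x c L R σ σ₂ (by rw [hupd, hσx])
                (fun z hz _ => Function.update_of_ne hz _ _)) hp⟩
        · -- var / var
          by_cases hxy : x = y
          · subst hxy
            rw [applySub_cons_inr, applySub_cons_inr] at hs0
            have hXY : applySub σ L = applySub σ R := List.append_cancel_left hs0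
            have hsol' : IsSolution σ (L, R) := hXY
            rw [applySub_cons_inr, applySub_cons_inr] at hn
            by_cases hx0 : σ x = []
            · have ln : (applySub σ L).length + (applySub σ R).length ≤ n := by
                rw [hx0] at hn
                simpa using hn
              have lm : eqLen (L, R) < m := by
                rw [eqLen_pair] at hm ⊢
                simp only [List.length_cons] at hm
                omega
              obtain ⟨σ'', hp⟩ := ihm _ lm (L, R) σ ln le_rfl hsol'
              exact ⟨σ'', Relation.ReflTransGen.head
                (NielsenAnn.p1 (Sum.inr x) L R σ σ (fun _ _ => rfl)) hp⟩
            · have hpos : 0 < (σ x).length := List.length_pos_iff.mpr hx0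
              have hlt : (applySub σ L).length + (applySub σ R).length < n := by
                simp only [List.length_append] at hn
                omega
              obtain ⟨σ'', hp⟩ := ihn _ hlt (eqLen (L, R)) (L, R) σ le_rfl le_rfl hsol'
              exact ⟨σ'', Relation.ReflTransGen.head
                (NielsenAnn.p1 (Sum.inr x) L R σ σ (fun _ _ => rfl)) hp⟩
          · by_cases hx0 : σ x = []
            · exact eraseLcase x L rfl hx0
            · by_cases hy0 : σ y = []
              · exact eraseRcase y R rfl hy0
              · rw [applySub_cons_inr, applySub_cons_inr] at hs0
                by_cases hlen : (σ x).length ≤ (σ y).length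
                · -- p4L
                  have h₁ : σ x <+: σ y ++ applySub σ R := by
                    rw [← hs0]; exact List.prefix_append _ _
                  have hpre : σ x <+: σ y :=
                    List.prefix_of_prefix_length_le h₁ (List.prefix_append _ _) hlen
                  obtain ⟨t, ht⟩ := hpre
                  have hXY : applySub σ L = t ++ applySub σ R := by
                    rw [← ht, List.append_assoc] at hs0
                    exact List.append_cancel_left hs0
                  set σ₂ := Function.update σ y t with hσ₂
                  have hupd : σ₂ y = t := Function.update_self y t σ
                  have hupdx : σ₂ x = σ x := Function.update_of_ne hxy _ _
                  have e₁ : applySub σ₂ (substVar y [Sum.inr x, Sum.inr y] L) =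
                      applySub σ L :=
                    applySub_substVar
                      (fun _ => by
                        rw [applySub_cons_inr, applySub_cons_inr, applySub_nil,
                          List.append_nil, hupd, hupdx, ht])
                      (fun z hz _ => Function.update_of_ne hz _ _)
                  have e₂ : applySub σ₂ (substVar y [Sum.inr x, Sum.inr y] R) =
                      applySub σ R :=
                    applySub_substVar
                      (fun _ => by
                        rw [applySub_cons_inr, applySub_cons_inr, applySub_nil,
                          List.append_nil, hupd, hupdx, ht])
                      (fun z hz _ => Function.update_of_ne hz _ _)
                  have hsol' : IsSolution σ₂ (substVar y [Sum.inr x, Sum.inr y] L,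
                      Sum.inr y :: substVar y [Sum.inr x, Sum.inr y] R) := by
                    show applySub σ₂ _ = applySub σ₂ _
                    rw [e₁, applySub_cons_inr, hupd, e₂]
                    exact hXY
                  have hpos : 0 < (σ x).length := List.length_pos_iff.mpr hx0
                  have hlt :
                      (applySub σ₂ (substVar y [Sum.inr x, Sum.inr y] L)).length +
                      (applySub σ₂
                        (Sum.inr y :: substVar y [Sum.inr x, Sum.inr y] R)).length
                      < n := by
                    rw [e₁, applySub_cons_inr, hupd, e₂]
                    rw [applySub_cons_inr, applySub_cons_inr, ← ht] at hn
                    simp only [List.length_append] at hn ⊢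
                    omega
                  obtain ⟨σ'', hp⟩ := ihn _ hlt _ _ σ₂ le_rfl le_rfl hsol'
                  exact ⟨σ'', Relation.ReflTransGen.head
                    (NielsenAnn.p4L x y hxy L R σ σ₂ hx0 (by rw [hupd, ht])
                      (fun z hz _ => Function.update_of_ne hz _ _)) hp⟩
                · -- p4R
                  push_neg at hlen
                  have h₁ : σ y <+: σ x ++ applySub σ L := by
                    rw [hs0]; exact List.prefix_append _ _
                  have hpre : σ y <+: σ x :=
                    List.prefix_of_prefix_length_le h₁ (List.prefix_append _ _)
                      hlen.le
                  obtain ⟨t, ht⟩ := hpre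
                  have hXY : t ++ applySub σ L = applySub σ R := by
                    rw [← ht, List.append_assoc] at hs0
                    exact List.append_cancel_left hs0
                  set σ₂ := Function.update σ x t with hσ₂
                  have hupd : σ₂ x = t := Function.update_self x t σ
                  have hupdy : σ₂ y = σ y := Function.update_of_ne (Ne.symm hxy) _ _
                  have e₁ : applySub σ₂ (substVar x [Sum.inr y, Sum.inr x] L) =
                      applySub σ L :=
                    applySub_substVar
                      (fun _ => by
                        rw [applySub_cons_inr, applySub_cons_inr, applySub_nil,
                          List.append_nil, hupd, hupdy, ht])
                      (fun z hz _ => Function.update_of_ne hz _ _)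
                  have e₂ : applySub σ₂ (substVar x [Sum.inr y, Sum.inr x] R) =
                      applySub σ R :=
                    applySub_substVar
                      (fun _ => by
                        rw [applySub_cons_inr, applySub_cons_inr, applySub_nil,
                          List.append_nil, hupd, hupdy, ht])
                      (fun z hz _ => Function.update_of_ne hz _ _)
                  have hsol' : IsSolution σ₂
                      (Sum.inr x :: substVar x [Sum.inr y, Sum.inr x] L,
                        substVar x [Sum.inr y, Sum.inr x] R) := by
                    show applySub σ₂ _ = applySub σ₂ _
                    rw [applySub_cons_inr, hupd, e₁, e₂]
                    exact hXY
                  have hpos : 0 < (σ y).length := List.length_pos_iff.mpr hy0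
                  have hlt :
                      (applySub σ₂
                        (Sum.inr x :: substVar x [Sum.inr y, Sum.inr x] L)).length +
                      (applySub σ₂ (substVar x [Sum.inr y, Sum.inr x] R)).length
                      < n := by
                    rw [applySub_cons_inr, hupd, e₁, e₂]
                    rw [applySub_cons_inr, applySub_cons_inr, ← ht] at hn
                    simp only [List.length_append] at hn ⊢
                    omega
                  obtain ⟨σ'', hp⟩ := ihn _ hlt _ _ σ₂ le_rfl le_rfl hsol'
                  exact ⟨σ'', Relation.ReflTransGen.head
                    (NielsenAnn.p4R x y hxy L R σ σ₂ hy0 (by rw [hupd, ht])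
                      (fun z hz _ => Function.update_of_ne hz _ _)) hp⟩

end Fwd
/-- For a quadratic word equation `E`, an assignment `σ` is a
solution of `E` iff, in the annotated Nielsen transformation, `E[σ]` can reach
the trivial annotated configuration `(ε = ε)[σ']` (whose assignment has empty
domain, i.e. is arbitrary). -/
theorem isSolution_iff_nielsenAnn_reaches_trivial
    [Finite A] [Finite V] [DecidableEq A] [DecidableEq V]
    (E : Equation A V) (hq : Quadratic E) (σ : V → List A) :
    IsSolution σ E ↔
      ∃ σ' : V → List A,
        Relation.ReflTransGen NielsenAnn (E, σ) ((([], []) : Equation A V), σ') := by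
  constructor
  · intro hsol
    exact fwd ((applySub σ E.1).length + (applySub σ E.2).length) (eqLen E) E σ
      le_rfl le_rfl hsol
  · rintro ⟨σ', h⟩
    have key : ∀ p : Equation A V × (V → List A),
        Relation.ReflTransGen NielsenAnn p ((([], []) : Equation A V), σ') →
        IsSolution p.2 p.1 := by
      intro p hp
      induction hp using Relation.ReflTransGen.head_induction_on with
      | refl => rfl
      | head step _ ih => exact back_step step ih
    exact key (E, σ) h

end WordEq
end
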